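/- Let α be a non-principal ultrafilter on a countably infinite metric space X. If α is selective, then α is either Cauchy or discrete. -/

import Mathlib

open Filter Set

section Aux

variable {X : Type*} (α : Ultrafilter X)

def UltraSelective'' (α : Ultrafilter X) : Prop :=
  ∀ g : X → X, (∃ A ∈ α, Set.InjOn g A) ∨ (∃ A ∈ α, ∃ c, ∀ i ∈ A, g i = c)

lemma mem_infinite' (hα : (α : Filter X) ≤ Filter.cofinite)
    {A : Set X} (hA : A ∈ α) : A.Infinite := by
  intro hfin
  have h1 : Aᶜ ∈ α := hα (by simp [Filter.mem_cofinite, hfin])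
  have h2 : A ∩ Aᶜ ∈ α := Filter.inter_mem hA h1
  simp at h2

lemma two_valued_const' (hα : (α : Filter X) ≤ Filter.cofinite)
    (hsel : UltraSelective'' α) (g : X → X) (a b : X)
    (hg : ∀ x, g x = a ∨ g x = b) :
    ∃ A ∈ α, ∃ c, ∀ i ∈ A, g i = c := by
  rcases hsel g with ⟨A, hA, hinj⟩ | h
  · exfalso
    have hAinf := mem_infinite' α hα hA
    have himg : (g '' A).Finite := by
      apply ((Set.finite_singleton b).insert a).subset
      rintro _ ⟨x, hx, rfl⟩
      rcases hg x with h | h <;> simp [h]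
    exact hAinf (Set.Finite.of_finite_image himg hinj)
  · exact h

lemma diagonal' (hα : (α : Filter X) ≤ Filter.cofinite)
    (hsel : UltraSelective'' α) (e : ℕ ≃ X) (A : X → Set X) (hA : ∀ x, A x ∈ α) :
    ∃ B ∈ α, ∀ x ∈ B, ∀ y ∈ B, e.symm x < e.symm y → y ∈ A x := by
  classical
  set ι : X → ℕ := fun x => e.symm x with hιdef
  have hιinj : Function.Injective ι := e.symm.injective
  set D : ℕ → Set X := fun n => (⋂ k ∈ Finset.range (n+1), A (e k)) ∩ {y | n < ι y}
    with hDdef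
  have hDmem : ∀ n, D n ∈ α := by
    intro n
    apply Filter.inter_mem
    · exact (Filter.biInter_finset_mem _).2 fun k _ => hA (e k)
    · apply hα
      rw [Filter.mem_cofinite]
      have he : {y : X | n < ι y}ᶜ = ι ⁻¹' (Set.Iic n) := by
        ext y; simp [Set.mem_Iic, not_lt]
      rw [he]
      exact Set.Finite.preimage hιinj.injOn (Set.finite_Iic n)
  -- the first level where y leaves D
  have hex : ∀ y : X, ∃ n, y ∉ D n := by
    intro y
    exact ⟨ι y, fun hy => lt_irrefl (ι y) hy.2⟩
  set f : X → ℕ := fun y => Nat.find (hex y) with hfdef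
  have hf1 : ∀ y, y ∉ D (f y) := fun y => Nat.find_spec (hex y)
  have hf2 : ∀ y m, m < f y → y ∈ D m := by
    intro y m hm
    by_contra h
    exact absurd hm (not_lt.2 (Nat.find_le h))
  -- selectivity on f
  rcases hsel (fun y => e (f y)) with ⟨C₀, hC₀, hinj0⟩ | ⟨B, hB, c, hc⟩
  swap
  · exfalso
    obtain ⟨y, hyB, hyD⟩ := Ultrafilter.nonempty_of_mem (Filter.inter_mem hB (hDmem (ι c)))
    have : f y = ι c := by
      have := hc y hyB
      have : e (f y) = e (ι c) := by simpa [hιdef] using this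
      exact e.injective this
    exact hf1 y (this ▸ hyD)
  have hfinj : Set.InjOn f C₀ := by
    intro x hx y hy hxy
    exact hinj0 hx hy (by simp [hxy])
  -- intervals
  have hstepex : ∀ n : ℕ, ∃ m : ℕ, n < m ∧ ∀ y ∈ C₀, m ≤ ι y → n < f y := by
    intro n
    have hfin : ({y | y ∈ C₀ ∧ f y ≤ n}).Finite := by
      refine Set.Finite.of_finite_image (f := f) ((Set.finite_Iic n).subset ?_)
        (hfinj.mono (fun y hy => hy.1))
      rintro _ ⟨y, hy, rfl⟩
      exact Set.mem_Iic.2 hy.2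
    obtain ⟨m₀, hm₀⟩ := (hfin.image ι).bddAbove
    refine ⟨max (n+1) (m₀+1), lt_of_lt_of_le (Nat.lt_succ_self n) (le_max_left _ _), ?_⟩
    intro y hy hmy
    by_contra h
    have hyS : y ∈ {y | y ∈ C₀ ∧ f y ≤ n} := ⟨hy, not_lt.1 h⟩
    have : ι y ≤ m₀ := hm₀ ⟨y, hyS, rfl⟩
    have : m₀ + 1 ≤ ι y := le_trans (le_max_right _ _) hmy
    omega
  choose step hstep1 hstep2 using hstepex
  set ν : ℕ → ℕ := fun k => Nat.rec 0 (fun _ m => step m) k with hνdef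
  have hν0 : ν 0 = 0 := rfl
  have hνsucc : ∀ k, ν (k+1) = step (ν k) := fun k => rfl
  have hνmono : StrictMono ν := strictMono_nat_of_lt_succ (fun k => by
    rw [hνsucc]; exact hstep1 (ν k))
  have hνle : ∀ k, k ≤ ν k := fun k => hνmono.le_apply
  have hνf : ∀ k, ∀ y ∈ C₀, ν (k+1) ≤ ι y → ν k < f y := by
    intro k y hy h
    exact hstep2 (ν k) y hy (by rwa [hνsucc] at h)
  -- interval index
  set K : X → ℕ := fun y => Nat.findGreatest (fun k => ν k ≤ ι y) (ι y) with hKdef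
  have hK1 : ∀ y, ν (K y) ≤ ι y := by
    intro y
    exact Nat.findGreatest_spec (P := fun k => ν k ≤ ι y) (m := 0) (Nat.zero_le _)
      (by exact Nat.zero_le (ι y))
  have hK2 : ∀ y, ι y < ν (K y + 1) := by
    intro y
    by_cases h : K y + 1 ≤ ι y
    · by_contra hcon
      exact Nat.findGreatest_is_greatest (P := fun k => ν k ≤ ι y)
        (Nat.lt_succ_self _) h (not_lt.1 hcon)
    · calc ι y < K y + 1 := not_le.1 h
        _ ≤ ν (K y + 1) := hνle _
  -- selectivity on K
  rcases hsel (fun y => e (K y)) with ⟨C₁, hC₁, hinj1⟩ | ⟨B, hB, c, hc⟩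
  swap
  · exfalso
    have hBsub : B ⊆ ι ⁻¹' (Set.Iio (ν (ι c + 1))) := by
      intro y hy
      have : K y = ι c := e.injective (by simpa [hιdef] using hc y hy)
      simpa [this] using this ▸ hK2 y
    exact mem_infinite' α hα hB
      ((Set.Finite.preimage hιinj.injOn (Set.finite_Iio _)).subset hBsub)
  have hKinj : Set.InjOn K C₁ := fun x hx y hy hxy => hinj1 hx hy (by simp [hxy])
  -- parity
  obtain ⟨C₂, hC₂, c₂, hc₂⟩ := two_valued_const' α hα hsel (fun y => e (K y % 2)) (e 0) (e 1)
    (fun y => by rcases Nat.mod_two_eq_zero_or_one (K y) with h | h <;> simp [h])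
  have hpar : ∀ x ∈ C₂, ∀ y ∈ C₂, K x % 2 = K y % 2 := by
    intro x hx y hy
    have := (hc₂ x hx).trans (hc₂ y hy).symm
    exact e.injective this
  refine ⟨C₀ ∩ C₁ ∩ C₂, Filter.inter_mem (Filter.inter_mem hC₀ hC₁) hC₂, ?_⟩
  rintro x ⟨⟨hx0, hx1⟩, hx2⟩ y ⟨⟨hy0, hy1⟩, hy2⟩ hxy
  have hxy' : ι x < ι y := hxy
  have hxyne : x ≠ y := fun h => by simp [h] at hxy
  have hKne : K x ≠ K y := fun h => hxyne (hKinj hx1 hy1 h)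
  have hKlt : K x < K y := by
    rcases lt_or_gt_of_ne hKne with h | h
    · exact h
    · exfalso
      have : ν (K y + 1) ≤ ν (K x) := hνmono.monotone h
      have h1 := hK1 x
      have h2 := hK2 y
      omega
  have hK2le : K x + 2 ≤ K y := by
    have := hpar x hx2 y hy2
    omega
  -- conclude
  have hfy : ν (K x + 1) < f y := by
    have h1 : ν (K y - 1) < f y := by
      apply hνf (K y - 1) y hy0
      have : K y - 1 + 1 = K y := by omega
      rw [this]
      exact hK1 y
    have hle : K x + 1 ≤ K y - 1 := by omega
    have h2 : ν (K x + 1) ≤ ν (K y - 1) := hνmono.monotone hle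
    omega
  have hιxfy : ι x < f y := lt_of_lt_of_le (lt_of_lt_of_le (hK2 x) (le_of_lt hfy)) (le_refl _)
  have hyD : y ∈ D (ι x) := hf2 y (ι x) hιxfy
  have := hyD.1
  simp only [Set.mem_iInter] at this
  have hmem := this (ι x) (Finset.mem_range.2 (Nat.lt_succ_self _))
  simpa [hιdef] using hmem

lemma ramsey' (hα : (α : Filter X) ≤ Filter.cofinite)
    (hsel : UltraSelective'' α) (e : ℕ ≃ X) (R : X → X → Prop)
    (hsymm : ∀ x y, R x y → R y x) :
    (∃ A ∈ α, ∀ x ∈ A, ∀ y ∈ A, x ≠ y → R x y) ∨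
    (∃ A ∈ α, ∀ x ∈ A, ∀ y ∈ A, x ≠ y → ¬ R x y) := by
  classical
  set W : Set X := {x | {y | R x y} ∈ α} with hWdef
  by_cases hW : W ∈ α
  · left
    have hA : ∀ x, {y | x ∈ W → R x y} ∈ α := by
      intro x
      by_cases hx : x ∈ W
      · exact Filter.mem_of_superset hx (fun y hy _ => hy)
      · exact Filter.mem_of_superset Filter.univ_mem (fun y _ hxW => (hx hxW).elim)
    obtain ⟨B, hB, hBspec⟩ := diagonal' α hα hsel e _ hA
    refine ⟨B ∩ W, Filter.inter_mem hB hW, ?_⟩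
    rintro x ⟨hxB, hxW⟩ y ⟨hyB, hyW⟩ hxy
    rcases lt_or_gt_of_ne (fun h : e.symm x = e.symm y => hxy (e.symm.injective h)) with h | h
    · exact hBspec x hxB y hyB h hxW
    · exact hsymm y x (hBspec y hyB x hxB h hyW)
  · right
    have hWc : Wᶜ ∈ α := Ultrafilter.compl_mem_iff_notMem.2 hW
    have hA : ∀ x, {y | x ∈ Wᶜ → ¬ R x y} ∈ α := by
      intro x
      by_cases hx : x ∈ W
      · exact Filter.mem_of_superset Filter.univ_mem (fun y _ hxc => absurd hx hxc)
      · have : {y | R x y}ᶜ ∈ α := Ultrafilter.compl_mem_iff_notMem.2 hx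
        exact Filter.mem_of_superset this (fun y hy _ => hy)
    obtain ⟨B, hB, hBspec⟩ := diagonal' α hα hsel e _ hA
    refine ⟨B ∩ Wᶜ, Filter.inter_mem hB hWc, ?_⟩
    rintro x ⟨hxB, hxW⟩ y ⟨hyB, hyW⟩ hxy
    rcases lt_or_gt_of_ne (fun h : e.symm x = e.symm y => hxy (e.symm.injective h)) with h | h
    · exact hBspec x hxB y hyB h hxW
    · exact fun hr => (hBspec y hyB x hxB h hyW) (hsymm x y hr)

end Aux

/-- `α` is Cauchy: for every `ε > 0` there is `A ∈ α` with diameter at most `ε`. -/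
def UltraCauchy {X : Type*} [MetricSpace X] (α : Ultrafilter X) : Prop :=
  ∀ ε : ℝ, 0 < ε → ∃ A ∈ α, ∀ a ∈ A, ∀ b ∈ A, dist a b ≤ ε

/-- `α` is discrete: there are `δ > 0` and `A ∈ α` such that any two distinct points
of `A` are at distance at least `δ`. -/
def UltraDiscrete {X : Type*} [MetricSpace X] (α : Ultrafilter X) : Prop :=
  ∃ δ : ℝ, 0 < δ ∧ ∃ A ∈ α, ∀ a ∈ A, ∀ b ∈ A, a ≠ b → δ ≤ dist a b

/-- `α` is selective: every `g` is either `α`-injective or `α`-constant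
(identifying the countably infinite space `X` with `ℕ` via a fixed enumeration). -/
def UltraSelective {X : Type*} (α : Ultrafilter X) : Prop :=
  ∀ g : X → X, (∃ A ∈ α, Set.InjOn g A) ∨ (∃ A ∈ α, ∃ c, ∀ i ∈ A, g i = c)

theorem stmt_5 {X : Type*} [MetricSpace X] [Countable X] [Infinite X]
    (α : Ultrafilter X) (hα : (α : Filter X) ≤ Filter.cofinite)
    (hsel : UltraSelective α) :
    UltraCauchy α ∨ UltraDiscrete α := by
  obtain ⟨d⟩ := nonempty_denumerable X
  set e : ℕ ≃ X := (Denumerable.eqv X).symm with hedef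
  have hsel' : UltraSelective'' α := hsel
  by_cases hd : UltraDiscrete α
  · exact Or.inr hd
  · left
    intro ε hε
    rcases ramsey' α hα hsel' e (fun x y => dist x y ≤ ε)
        (fun x y h => by rw [show dist y x = dist x y from dist_comm y x]; exact h) with ⟨A, hA, hspec⟩ | ⟨A, hA, hspec⟩
    · refine ⟨A, hA, ?_⟩
      intro a ha b hb
      by_cases hab : a = b
      · simp [hab, hε.le]
      · exact hspec a ha b hb hab
    · exfalso
      exact hd ⟨ε, hε, A, hA, fun a ha b hb hab => le_of_lt (not_le.1 (hspec a ha b hb hab))⟩
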